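/- Let m and n be positive integers and let d = gcd(m, n). If a prime p divides m/d or divides n/d, then p lies in the ideal of ℤ[X] generated by the cyclotomic polynomials Φ_m(X) and Φ_n(X); equivalently, p = 0 in the quotient ring ℤ[X]/(Φ_m(X), Φ_n(X)). -/

import Mathlib

open Polynomial

lemma aux_cyclo_mem (m n : ℕ) (hm : 0 < m) (hn : 0 < n) (p : ℕ) (hp : p.Prime)
    (hdvd : p ∣ m / Nat.gcd m n) :
    (p : ℤ[X]) ∈ Ideal.span {cyclotomic m ℤ, cyclotomic n ℤ} := by
  set d := Nat.gcd m n with hd_def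
  have hd : d ∣ m := Nat.gcd_dvd_left m n
  obtain ⟨k, hk⟩ := hdvd
  have hmd : m = d * (p * k) := by
    rw [← hk, Nat.mul_div_cancel' hd]
  set q := d * k with hq_def
  have hqm : q * p = m := by rw [hmd]; ring
  have hk0 : 0 < k := by
    rcases Nat.eq_zero_or_pos k with rfl | h
    · simp [hmd] at hm
    · exact h
  have hq0 : 0 < q := Nat.mul_pos (Nat.gcd_pos_of_pos_left n hm) hk0
  have hqlt : q < m := by
    calc q < q * p := lt_mul_iff_one_lt_right hq0 |>.mpr hp.one_lt
    _ = m := hqm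
  have hqdvd : q ∣ m := ⟨p, hqm.symm⟩
  set I := Ideal.span {cyclotomic m ℤ, cyclotomic n ℤ} with hI
  let mk := Ideal.Quotient.mk I
  -- images of cyclotomics are zero
  have hΦm : mk (cyclotomic m ℤ) = 0 := by
    rw [Ideal.Quotient.eq_zero_iff_mem]
    exact Ideal.subset_span (by left; rfl)
  have hΦn : mk (cyclotomic n ℤ) = 0 := by
    rw [Ideal.Quotient.eq_zero_iff_mem]
    exact Ideal.subset_span (by right; rfl)
  have hxm : (mk X) ^ m = 1 := by
    have h1 : mk (X ^ m - 1) = 0 := by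
      obtain ⟨c, hc⟩ := cyclotomic.dvd_X_pow_sub_one m ℤ
      rw [hc, map_mul, hΦm, zero_mul]
    have := sub_eq_zero.mp (by simpa using h1)
    simpa using this
  have hxn : (mk X) ^ n = 1 := by
    have h1 : mk (X ^ n - 1) = 0 := by
      obtain ⟨c, hc⟩ := cyclotomic.dvd_X_pow_sub_one n ℤ
      rw [hc, map_mul, hΦn, zero_mul]
    have := sub_eq_zero.mp (by simpa using h1)
    simpa using this
  have hxd : (mk X) ^ d = 1 := pow_gcd_eq_one.mpr ⟨hxm, hxn⟩
  have hxq : (mk X) ^ q = 1 := by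
    rw [hq_def, pow_mul, hxd, one_pow]
  -- the geometric sum
  set S : ℤ[X] := ∑ i ∈ Finset.range p, (X ^ q) ^ i with hS
  have hgeom : S * (X ^ q - 1) = X ^ m - 1 := by
    rw [hS, geom_sum_mul, ← pow_mul, hqm]
  have hdvdS : cyclotomic m ℤ ∣ S := by
    have h1 : (X ^ q - 1) * cyclotomic m ℤ ∣ X ^ m - 1 :=
      X_pow_sub_one_mul_cyclotomic_dvd_X_pow_sub_one_of_dvd ℤ
        (Nat.mem_properDivisors.mpr ⟨hqdvd, hqlt⟩)
    rw [← hgeom, mul_comm S] at h1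
    have hne : (X : ℤ[X]) ^ q - 1 ≠ 0 := by
      intro h
      have := congrArg natDegree (sub_eq_zero.mp h)
      simp [natDegree_X_pow, hq0.ne'] at this
    exact (mul_dvd_mul_iff_left hne).mp h1
  have hS0 : mk S = 0 := by
    obtain ⟨c, hc⟩ := hdvdS
    rw [hc, map_mul, hΦm, zero_mul]
  have : mk S = (p : ℤ[X] ⧸ I) := by
    rw [hS, map_sum]
    simp only [map_pow, hxq, one_pow]
    simp
  rw [this] at hS0
  have : ((p : ℤ[X]) : ℤ[X] ⧸ I) = 0 := by
    rw [← map_natCast mk p] at hS0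
    exact hS0
  exact Ideal.Quotient.eq_zero_iff_mem.mp (by simpa using hS0)

theorem stmt0 (m n : ℕ) (hm : 0 < m) (hn : 0 < n) (p : ℕ) (hp : p.Prime)
    (hdvd : p ∣ m / Nat.gcd m n ∨ p ∣ n / Nat.gcd m n) :
    (p : ℤ[X]) ∈ Ideal.span {cyclotomic m ℤ, cyclotomic n ℤ} := by
  rcases hdvd with h | h
  · exact aux_cyclo_mem m n hm hn p hp h
  · have := aux_cyclo_mem n m hn hm p hp (by rwa [Nat.gcd_comm])
    rwa [Set.pair_comm] at this
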